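/- arXiv:2002.03965 — 2 statements merged into one kernel-verified Lean document; each statement's English description precedes it below -/
import Mathlib

section
/- The number of distinct minimal periods among the nonempty suffix-palindromes of a string of length n+1 is O(log n); more precisely, if consecutive series heads shrink by a factor of at least 3/2, the number of series is at most log_{3/2}(n+1) + 1. -/
/-- `p` is a period of `w`: letters at distance `p` agree. -/
def HasPeriod {α : Type*} (w : List α) (p : ℕ) : Prop :=
  ∀ i : ℕ, i + p < w.length → w[i]? = w[i + p]?

/-- The minimal period of `w`. -/
noncomputable def minPeriod {α : Type*} (w : List α) : ℕ :=
  sInf {p : ℕ | 0 < p ∧ HasPeriod w p}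

/-- `k`-th power of a list: `k` concatenated copies of `w`. -/
def listPow {α : Type*} (w : List α) (k : ℕ) : List α := (List.replicate k w).flatten

/-- `s` admits a factorization into exactly `k` nonempty palindromes. -/
def HasPalFact {α : Type*} (s : List α) (k : ℕ) : Prop :=
  ∃ L : List (List α), L.length = k ∧ L.flatten = s ∧ ∀ w ∈ L, w ≠ [] ∧ w.reverse = w

/-- Palindromic length: minimum number of nonempty palindromic factors (`pl ε = 0`). -/
noncomputable def pl {α : Type*} (s : List α) : ℕ := sInf {k : ℕ | HasPalFact s k}

/-- `plParity j s` : minimum `k ≡ j (mod 2)` with a palindromic `k`-factorization, `⊤` if none. -/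
noncomputable def plParity {α : Type*} (j : ℕ) (s : List α) : ℕ∞ :=
  sInf {n : ℕ∞ | ∃ k : ℕ, n = (k : ℕ∞) ∧ k % 2 = j ∧ HasPalFact s k}

/-- The set of nonempty palindromic suffixes of `s` with minimal period exactly `p`
(the `p`-series of `s`). -/
def pSeries {α : Type*} (s : List α) (p : ℕ) : Set (List α) :=
  {w | w <:+ s ∧ w ≠ [] ∧ w.reverse = w ∧ minPeriod w = p}

section Aux
variable {α : Type*}

lemma hasPeriod_length (w : List α) : HasPeriod w w.length :=
  fun _ h => absurd h (by omega)

lemma minPeriod_spec {w : List α} (hw : w ≠ []) :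
    0 < minPeriod w ∧ HasPeriod w (minPeriod w) := by
  have hne : {p : ℕ | 0 < p ∧ HasPeriod w p}.Nonempty :=
    ⟨w.length, List.length_pos_iff.mpr hw, hasPeriod_length w⟩
  exact Nat.sInf_mem hne

lemma minPeriod_le {w : List α} {q : ℕ} (hq : 0 < q) (h : HasPeriod w q) :
    minPeriod w ≤ q := Nat.sInf_le ⟨hq, h⟩

lemma hasPeriod_of_prefix {u v : List α} (h : u <+: v) {p : ℕ} (hp : HasPeriod v p) :
    HasPeriod u p := by
  obtain ⟨t, rfl⟩ := h
  intro i hi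
  have h1 : (u ++ t)[i]? = u[i]? := List.getElem?_append_left (by omega)
  have h2 : (u ++ t)[i + p]? = u[i + p]? := List.getElem?_append_left hi
  rw [← h1, ← h2]
  exact hp i (by simp only [List.length_append]; omega)

lemma hasPeriod_of_border {u v : List α} (hpre : u <+: v) (hsuf : u <:+ v) :
    HasPeriod v (v.length - u.length) := by
  obtain ⟨t, rfl⟩ := hsuf
  obtain ⟨r, hr⟩ := hpre
  intro i hi
  have hlen : (t ++ u).length = t.length + u.length := List.length_append
  have hq : (t ++ u).length - u.length = t.length := by omega
  rw [hq] at hi ⊢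
  have hiu : i < u.length := by omega
  have h1 : (t ++ u)[i]? = u[i]? := by
    conv_lhs => rw [← hr]
    exact List.getElem?_append_left hiu
  have h2 : (t ++ u)[i + t.length]? = u[i]? := by
    rw [List.getElem?_append_right (by omega)]
    congr 1
    omega
  rw [h1, h2]

/-- lifting a small period of a long prefix to the whole word -/
lemma hasPeriod_lift {u v : List α} (huv : u <+: v) {p d : ℕ}
    (hu : HasPeriod u d) (hv : HasPeriod v p) (hp : 0 < p) (hle : p + d ≤ u.length) :
    HasPeriod v d := by
  intro i
  induction i using Nat.strong_induction_on with
  | _ i ih =>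
    intro hi
    by_cases hcase : i + d < u.length
    · obtain ⟨t, rfl⟩ := huv
      have h1 : (u ++ t)[i]? = u[i]? := List.getElem?_append_left (by omega)
      have h2 : (u ++ t)[i + d]? = u[i + d]? := List.getElem?_append_left hcase
      rw [h1, h2]
      exact hu i hcase
    · have hip : p ≤ i := by omega
      have h1 : v[i - p]? = v[i]? := by
        have := hv (i - p) (by omega)
        rwa [Nat.sub_add_cancel hip] at this
      have h2 : v[i - p + d]? = v[i + d]? := by
        have := hv (i - p + d) (by omega)
        rwa [show i - p + d + p = i + d by omega] at this
      rw [← h1, ← h2]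
      exact ih (i - p) (by omega) (by omega)

/-- the gap lemma: two suffix palindromes whose lengths are within a factor 3/2
have the same minimal period -/
lemma gap_lemma {s u v : List α} (hu : u <:+ s) (hv : v <:+ s) (hun : u ≠ [])
    (hupal : u.reverse = u) (hvpal : v.reverse = v)
    (hlt : u.length < v.length) (hgap : 2 * v.length ≤ 3 * u.length) :
    minPeriod u = minPeriod v := by
  have hvn : v ≠ [] := by
    intro h; rw [h] at hlt; simp at hlt
  have husuf : u <:+ v := List.suffix_of_suffix_length_le hu hv (le_of_lt hlt)
  have hupre : u <+: v := by
    have h2 := List.reverse_prefix.mpr husuf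
    rwa [hupal, hvpal] at h2
  set q := v.length - u.length with hqdef
  have hq0 : 0 < q := by omega
  have hqper : HasPeriod v q := hasPeriod_of_border hupre husuf
  obtain ⟨hp0, hpper⟩ := minPeriod_spec hvn
  set p := minPeriod v
  have hpq : p ≤ q := minPeriod_le hq0 hqper
  have hup : HasPeriod u p := hasPeriod_of_prefix hupre hpper
  obtain ⟨hr0, hrper⟩ := minPeriod_spec hun
  set r := minPeriod u
  have hrp : r ≤ p := minPeriod_le hp0 hup
  have hvr : HasPeriod v r := hasPeriod_lift hupre hrper hpper hp0 (by omega)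
  have : p ≤ r := minPeriod_le hr0 hvr
  omega

/-- counting lemma for geometric-like finsets in ℕ -/
lemma count_aux : ∀ (t : ℕ) (G : Finset ℕ), G.card = t + 1 →
    (∀ a ∈ G, 1 ≤ a) → (∀ a ∈ G, ∀ b ∈ G, a < b → 3 * a < 2 * b) →
    ∀ (hne : G.Nonempty), ((3 : ℝ) / 2) ^ t ≤ (G.max' hne : ℝ) := by
  intro t
  induction t with
  | zero =>
    intro G hcard h1 _ hne
    have := h1 _ (G.max'_mem hne)
    simpa using by exact_mod_cast this
  | succ t ih =>
    intro G hcard h1 hchain hne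
    set M := G.max' hne with hM
    set G' := G.erase M with hG'
    have hcard' : G'.card = t + 1 := by
      rw [hG', Finset.card_erase_of_mem (G.max'_mem hne), hcard]
      omega
    have hne' : G'.Nonempty := Finset.card_pos.mp (by omega)
    have hsub : G' ⊆ G := Finset.erase_subset _ _
    have hIH := ih G' hcard' (fun a ha => h1 a (hsub ha))
      (fun a ha b hb hab => hchain a (hsub ha) b (hsub hb) hab) hne'
    set M' := G'.max' hne' with hM'
    have hM'G : M' ∈ G := hsub (G'.max'_mem hne')
    have hM'ne : M' ≠ M := Finset.ne_of_mem_erase (G'.max'_mem hne')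
    have hM'lt : M' < M := lt_of_le_of_ne (G.le_max' _ hM'G) hM'ne
    have hkey : 3 * M' < 2 * M := hchain M' hM'G M (G.max'_mem hne) hM'lt
    have hkeyR : (3 : ℝ) / 2 * (M' : ℝ) ≤ (M : ℝ) := by
      have : (3 : ℝ) * M' ≤ 2 * M := by exact_mod_cast le_of_lt hkey
      linarith
    calc ((3 : ℝ) / 2) ^ (t + 1) = (3 / 2) * (3 / 2) ^ t := by ring
    _ ≤ (3 / 2) * (M' : ℝ) := by
        apply mul_le_mul_of_nonneg_left hIH; norm_num
    _ ≤ (M : ℝ) := hkeyR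

end Aux

/-- the number of distinct minimal periods among nonempty suffix-palindromes of
a string of length `n + 1` (i.e. the number of series) is at most `log_{3/2}(n+1) + 1`. -/
theorem number_of_series_log {α : Type*} (s : List α) (n : ℕ) (hs : s.length = n + 1) :
    (({p : ℕ | ∃ u : List α, u <:+ s ∧ u ≠ [] ∧ u.reverse = u ∧ minPeriod u = p}.ncard : ℝ))
      ≤ Real.logb (3 / 2) (n + 1) + 1 := by
  set P := {p : ℕ | ∃ u : List α, u <:+ s ∧ u ≠ [] ∧ u.reverse = u ∧ minPeriod u = p} with hP
  have hb : (1 : ℝ) < 3 / 2 := by norm_num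
  have hn1 : (1 : ℝ) ≤ (n : ℝ) + 1 := by
    have : (0 : ℝ) ≤ (n : ℝ) := Nat.cast_nonneg n
    linarith
  have hlogb0 : 0 ≤ Real.logb (3 / 2) (n + 1) := Real.logb_nonneg hb hn1
  -- choose representatives
  have hrep : ∀ p ∈ P, ∃ u : List α, u <:+ s ∧ u ≠ [] ∧ u.reverse = u ∧ minPeriod u = p :=
    fun p hp => hp
  choose! rep hrep1 hrep2 hrep3 hrep4 using hrep
  -- P is finite
  have hPfin : P.Finite := by
    apply Set.Finite.subset (Set.Finite.image minPeriod s.tails.finite_toSet)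
    rintro p ⟨u, hu, -, -, hup⟩
    exact ⟨u, (List.mem_tails u s).mpr hu, hup⟩
  set f : ℕ → ℕ := fun p => (rep p).length with hf
  have hinj : Set.InjOn f P := by
    intro p hp p' hp' hpp
    have h1 : rep p <:+ rep p' ∨ rep p' <:+ rep p := by
      rcases le_total (rep p).length (rep p').length with h | h
      · exact Or.inl (List.suffix_of_suffix_length_le (hrep1 p hp) (hrep1 p' hp') h)
      · exact Or.inr (List.suffix_of_suffix_length_le (hrep1 p' hp') (hrep1 p hp) h)
    have heq : rep p = rep p' := by
      rcases h1 with h | h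
      · exact h.eq_of_length hpp
      · exact (h.eq_of_length hpp.symm).symm
    rw [← hrep4 p hp, ← hrep4 p' hp', heq]
  have hLfin : (f '' P).Finite := hPfin.image f
  have hLcard : (f '' P).ncard = P.ncard := Set.ncard_image_of_injOn hinj
  set G : Finset ℕ := hLfin.toFinset with hG
  have hGcard : G.card = P.ncard := by
    rw [hG, ← hLcard, Set.ncard_eq_toFinset_card _ hLfin]
  have hmemG : ∀ m, m ∈ G ↔ ∃ p ∈ P, f p = m := by
    intro m; rw [hG, Set.Finite.mem_toFinset]; simp [Set.mem_image]
  have h1G : ∀ a ∈ G, 1 ≤ a := by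
    intro a ha
    obtain ⟨p, hp, hfp⟩ := (hmemG a).mp ha
    have ha' : (rep p).length = a := hfp
    have : 0 < (rep p).length := List.length_pos_iff.mpr (hrep2 p hp)
    omega
  have hleG : ∀ a ∈ G, a ≤ n + 1 := by
    intro a ha
    obtain ⟨p, hp, hfp⟩ := (hmemG a).mp ha
    have ha' : (rep p).length = a := hfp
    have := (hrep1 p hp).length_le
    rw [hs] at this
    omega
  have hchain : ∀ a ∈ G, ∀ b ∈ G, a < b → 3 * a < 2 * b := by
    intro a ha b hb hab
    by_contra hcon
    push_neg at hcon
    obtain ⟨p, hp, hfp⟩ := (hmemG a).mp ha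
    obtain ⟨p', hp', hfp'⟩ := (hmemG b).mp hb
    have ha' : (rep p).length = a := hfp
    have hb' : (rep p').length = b := hfp'
    have hgap := gap_lemma (hrep1 p hp) (hrep1 p' hp') (hrep2 p hp) (hrep3 p hp) (hrep3 p' hp')
      (by omega) (by omega)
    rw [hrep4 p hp, hrep4 p' hp'] at hgap
    have heq : a = b := by rw [← hfp, ← hfp', hgap]
    omega
  -- conclude
  rcases Nat.eq_zero_or_pos P.ncard with h0 | hpos
  · rw [h0]; push_cast; linarith
  · set t := P.ncard with ht
    have hGne : G.Nonempty := Finset.card_pos.mp (by omega)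
    have hcount := count_aux (t - 1) G (by omega) h1G hchain hGne
    have hmax : (G.max' hGne : ℝ) ≤ (n : ℝ) + 1 := by
      have := hleG _ (G.max'_mem hGne)
      exact_mod_cast this
    have hpow : ((3 : ℝ) / 2) ^ (t - 1) ≤ (n : ℝ) + 1 := le_trans hcount hmax
    have hlog : ((t - 1 : ℕ) : ℝ) ≤ Real.logb (3 / 2) ((n : ℝ) + 1) := by
      have h1 : Real.logb (3 / 2) (((3 : ℝ) / 2) ^ (t - 1)) = (t - 1 : ℕ) := by
        rw [Real.logb_pow, Real.logb_self_eq_one hb]; ring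
      rw [← h1]
      exact (Real.logb_le_logb hb (by positivity) (by linarith)).mpr hpow
    have : ((t : ℕ) : ℝ) ≤ Real.logb (3 / 2) ((n : ℝ) + 1) + 1 := by
      have hc : ((t - 1 : ℕ) : ℝ) = (t : ℝ) - 1 := by
        have : 1 ≤ t := hpos
        push_cast [Nat.cast_sub this]
        ring
      rw [hc] at hlog
      linarith
    exact_mod_cast this
end

section
/- Let w = (uv)^r u be a palindrome that is a suffix of s[0..n], where |uv| = p is the minimal period of w and r ≥ 1. Suppose s[0..n] also has a suffix-palindrome with minimal period q < p, and suppose period p survives for at least p more appended letters (i.e., s[0..n+p] has a suffix of length at least |w| + p with period p). Then period q survives for fewer than p more letters: otherwise s[n-q+1..n+p] of length p+q has periods p and q, hence by the Fine–Wilf theorem period gcd(p,q) < p, making uv a proper power and contradicting minimality of p. -/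
lemma hasPeriod_of_suffix {α : Type*} {y x : List α} {p : ℕ}
    (h : HasPeriod y p) (hs : x <:+ y) : HasPeriod x p := by
  obtain ⟨a, rfl⟩ := hs
  intro i hi
  have h1 : x[i]? = (a ++ x)[a.length + i]? := by
    rw [List.getElem?_append_right (by omega)]; congr 1; omega
  have h2 : x[i+p]? = (a ++ x)[a.length + i + p]? := by
    rw [List.getElem?_append_right (by omega)]; congr 1; omega
  rw [h1, h2]
  exact h (a.length + i) (by simp; omega)

lemma hasPeriod_of_prefix_s11 {α : Type*} {y x : List α} {p : ℕ}
    (h : HasPeriod y p) (hs : x <+: y) : HasPeriod x p := by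
  obtain ⟨b, rfl⟩ := hs
  intro i hi
  have h1 : (x ++ b)[i]? = x[i]? := List.getElem?_append_left (by omega)
  have h2 : (x ++ b)[i+p]? = x[i+p]? := List.getElem?_append_left hi
  rw [← h1, ← h2]
  exact h i (by simp; omega)

lemma suffix_of_suffix_length_le {α : Type*} {x y l : List α}
    (hx : x <:+ l) (hy : y <:+ l) (h : x.length ≤ y.length) : x <:+ y := by
  rw [← List.reverse_prefix] at hx hy ⊢
  exact List.prefix_of_prefix_length_le hx hy (by simpa)

lemma hasPeriod_iterate {α : Type*} {m : List α} {p : ℕ} (h : HasPeriod m p) :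
    ∀ (k i : ℕ), i + k * p < m.length → m[i]? = m[i + k * p]? := by
  intro k
  induction k with
  | zero => simp
  | succ k ih =>
    intro i hi
    have h1 := ih i (by nlinarith [Nat.succ_mul k p])
    rw [h1, h (i + k * p) (by rw [Nat.succ_mul] at hi; omega)]
    congr 1; rw [Nat.succ_mul]; omega

lemma hasPeriod_propagate {α : Type*} {m : List α} {p g L : ℕ}
    (hp : 0 < p) (hL : L ≤ m.length) (hpg : p + g ≤ L)
    (hm : HasPeriod m p) (hwin : HasPeriod (m.drop (m.length - L)) g) :
    HasPeriod m g := by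
  intro i hi
  set n := m.length with hn
  obtain ⟨k, mm, hmm, hdm⟩ : ∃ k mm, mm < p ∧ p * k + mm = n - g - 1 - i :=
    ⟨_, _, Nat.mod_lt _ hp, Nat.div_add_mod _ p⟩
  have hcm : p * k = k * p := Nat.mul_comm _ _
  have hk1 : i + k * p + g < n := by omega
  have hk2 : n - L ≤ i + k * p := by omega
  have e1 : m[i]? = m[i + k * p]? := hasPeriod_iterate hm k i (by omega)
  have e3 : m[i + g]? = m[i + g + k * p]? := hasPeriod_iterate hm k (i + g) (by omega)
  have e2 : m[i + k * p]? = m[i + k * p + g]? := by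
    have hwl : (m.drop (n - L)).length = L := by simp [hn]; omega
    have w1 : (m.drop (n - L))[i + k * p - (n - L)]? = m[i + k * p]? := by
      rw [List.getElem?_drop]; congr 1; omega
    have w2 : (m.drop (n - L))[i + k * p - (n - L) + g]? = m[i + k * p + g]? := by
      rw [List.getElem?_drop]; congr 1; omega
    rw [← w1, ← w2]
    exact hwin _ (by omega)
  rw [e1, e2, e3]; congr 1; omega

lemma hasPeriod_sub {α : Type*} {x : List α} {p q : ℕ} (hle : q ≤ p)
    (hlen : p + q ≤ x.length) (hp : HasPeriod x p) (hq : HasPeriod x q) :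
    HasPeriod x (p - q) := by
  intro i hi
  rcases Nat.lt_or_ge (i + p) x.length with hc | hc
  · have e1 := hp i hc
    have e2 := hq (i + (p - q)) (by omega)
    rw [e1, e2]; congr 1; omega
  · have hiq : q ≤ i := by omega
    have e1 := hq (i - q) (by omega)
    have e2 := hp (i - q) (by omega)
    have : i - q + q = i := by omega
    rw [this] at e1
    rw [← e1, e2]; congr 1; omega

lemma fine_wilf_aux {α : Type*} : ∀ (N : ℕ) (x : List α) (p q : ℕ), p + q ≤ N →
    HasPeriod x p → HasPeriod x q → p + q ≤ x.length → HasPeriod x (Nat.gcd p q) := by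
  intro N
  induction N using Nat.strong_induction_on with
  | _ N ih =>
    intro x p q hN hp hq hlen
    rcases Nat.eq_zero_or_pos q with h0 | hqpos
    · subst h0; simpa using hp
    rcases Nat.eq_zero_or_pos p with h0 | hppos
    · subst h0; simpa using hq
    rcases le_or_gt q p with hle | hlt
    · have hsub := hasPeriod_sub hle hlen hp hq
      have := ih p (by omega) x (p - q) q (by omega) hsub hq (by omega)
      rwa [Nat.gcd_sub_self_left hle] at this
    · have hsub := hasPeriod_sub hlt.le (by omega) hq hp
      have := ih q (by omega) x p (q - p) (by omega) hp hsub (by omega)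
      rwa [Nat.gcd_sub_self_right hlt.le] at this

lemma eq_drop_of_suffix {α : Type*} {x m : List α} (h : x <:+ m) :
    m.drop (m.length - x.length) = x := by
  obtain ⟨a, rfl⟩ := h
  simp [List.length_append, Nat.add_sub_cancel, List.drop_left]

/-- let `w = (uv)^r u` be a palindromic suffix of `s` with minimal period
`p = |uv|`, `r ≥ 1`, and let `z` be a suffix-palindrome of `s` with minimal period `q < p`.
If, after appending the `p` letters `t`, period `p` survives (there is a suffix of `s ++ t`
of length `≥ |w| + p` with period `p`), then period `q` does not survive these `p` letters:
there is no suffix of `s ++ t` of length `≥ |z| + p` with period `q`. -/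
theorem smaller_period_dies {α : Type*} (s t u v w z : List α) (r p q : ℕ)
    (hr : 1 ≤ r) (hw : w = listPow (u ++ v) r ++ u) (hwpal : w.reverse = w)
    (hp : p = (u ++ v).length) (hmin : minPeriod w = p) (hws : w <:+ s)
    (hz : z <:+ s) (hzpal : z.reverse = z) (hzne : z ≠ []) (hq : minPeriod z = q)
    (hqp : q < p) (ht : t.length = p)
    (hsurv : ∃ y : List α, y <:+ s ++ t ∧ w.length + p ≤ y.length ∧ HasPeriod y p) :
    ¬ ∃ y : List α, y <:+ s ++ t ∧ z.length + p ≤ y.length ∧ HasPeriod y q := by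
  rintro ⟨y₂, hy2s, hy2l, hy2q⟩
  obtain ⟨y₁, hy1s, hy1l, hy1p⟩ := hsurv
  -- facts about q
  have hzlen : 0 < z.length := List.length_pos_iff.2 hzne
  have hZne : {n : ℕ | 0 < n ∧ HasPeriod z n}.Nonempty :=
    ⟨z.length, hzlen, fun i hi => absurd hi (by omega)⟩
  have hqmem : 0 < q ∧ HasPeriod z q := by
    have := Nat.sInf_mem hZne
    rwa [show sInf {n : ℕ | 0 < n ∧ HasPeriod z n} = q from hq] at this
  have hqpos : 0 < q := hqmem.1
  have hqz : q ≤ z.length := by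
    have := Nat.sInf_le (show z.length ∈ {n : ℕ | 0 < n ∧ HasPeriod z n} from
      ⟨hzlen, fun i hi => absurd hi (by omega)⟩)
    rwa [show sInf {n : ℕ | 0 < n ∧ HasPeriod z n} = q from hq] at this
  have hppos : 0 < p := lt_of_le_of_lt (Nat.zero_le q) hqp
  -- p ≤ |w|
  have hlpow : (listPow (u ++ v) r).length = r * (u ++ v).length := by
    simp [listPow, List.length_flatten, List.map_replicate, List.sum_replicate,
      smul_eq_mul]
  have hpw : p ≤ w.length := by
    have h1 : p ≤ r * p := Nat.le_mul_of_pos_left p hr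
    rw [hw, List.length_append, hlpow, ← hp]
    omega
  have hzs : z.length ≤ s.length := hz.length_le
  have hlen_st : (s ++ t).length = s.length + p := by simp [ht]
  have hpq_le : p + q ≤ (s ++ t).length := by omega
  -- the common suffix x of length p + q
  set x : List α := (s ++ t).drop ((s ++ t).length - (p + q)) with hxdef
  have hxsuf : x <:+ s ++ t := List.drop_suffix _ _
  have hxlen : x.length = p + q := by
    rw [hxdef, List.length_drop]; omega
  have hxy1 : x <:+ y₁ :=
    suffix_of_suffix_length_le hxsuf hy1s (by omega)
  have hxy2 : x <:+ y₂ :=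
    suffix_of_suffix_length_le hxsuf hy2s (by omega)
  have hxp : HasPeriod x p := hasPeriod_of_suffix hy1p hxy1
  have hxq : HasPeriod x q := hasPeriod_of_suffix hy2q hxy2
  have hxg : HasPeriod x (Nat.gcd p q) :=
    fine_wilf_aux (p + q) x p q le_rfl hxp hxq (by omega)
  have hgpos : 0 < Nat.gcd p q := Nat.gcd_pos_of_pos_left q hppos
  have hgq : Nat.gcd p q ≤ q := Nat.le_of_dvd hqpos (Nat.gcd_dvd_right p q)
  -- w ++ t has period p
  have hwt_suf : w ++ t <:+ s ++ t := by
    obtain ⟨a, ha⟩ := hws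
    exact ⟨a, by rw [← List.append_assoc, ha]⟩
  have hwt_len : (w ++ t).length = w.length + p := by simp [ht]
  have hwt_y1 : w ++ t <:+ y₁ :=
    suffix_of_suffix_length_le hwt_suf hy1s (by omega)
  have hwt_p : HasPeriod (w ++ t) p := hasPeriod_of_suffix hy1p hwt_y1
  -- x is the suffix of w ++ t of length p + q
  have hxwt : x <:+ w ++ t :=
    suffix_of_suffix_length_le hxsuf hwt_suf (by omega)
  have hdropx : (w ++ t).drop ((w ++ t).length - (p + q)) = x := by
    have := eq_drop_of_suffix hxwt
    rwa [hxlen] at this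
  -- propagate period gcd p q to all of w ++ t, then to w
  have hwt_g : HasPeriod (w ++ t) (Nat.gcd p q) := by
    refine hasPeriod_propagate (L := p + q) hppos (by omega) (by omega) hwt_p ?_
    rwa [hdropx]
  have hw_g : HasPeriod w (Nat.gcd p q) := hasPeriod_of_prefix_s11 hwt_g ⟨t, rfl⟩
  have hle : minPeriod w ≤ Nat.gcd p q :=
    Nat.sInf_le (show Nat.gcd p q ∈ {n : ℕ | 0 < n ∧ HasPeriod w n} from ⟨hgpos, hw_g⟩)
  rw [hmin] at hle
  omega
end
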